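/- With the atomic dual variable ξ^α as above and the decomposition G = s_t + c_t G_t given F_t, the conditional expectation satisfies α·ξ_t^α = F_{G_t}((λ_α − s_t)/c_t) − p_{G_t}((λ_α − s_t)/c_t)·(F_G(λ_α) − α)/p_G(λ_α), where p_{G_t}(z) is the conditional point mass of G_t at z. In particular, if the conditional CDF F_{G_t} is continuous at (λ_α − s_t)/c_t, then α·ξ_t^α = F_{G_t}((λ_α − s_t)/c_t). -/

import Mathlib

open MeasureTheory

noncomputable section

/-- Conditional expectation of the atomic CVaR dual variable, on a conditioning
event E ∈ F_t with G = s + c·G_t on E: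
α·ξ_t^α = F_{G_t|E}((λ_α−s)/c) − p_{G_t|E}((λ_α−s)/c)·(F_G(λ_α) − α)/p_G(λ_α),
and if the conditional CDF has no atom at (λ_α−s)/c then
α·ξ_t^α = F_{G_t|E}((λ_α−s)/c). -/
theorem stmt14 {Ω : Type*} [MeasurableSpace Ω] (P : Measure Ω) [IsProbabilityMeasure P]
    (G Gt : Ω → ℝ) (hGm : Measurable G) (hGtm : Measurable Gt) (hG : Integrable G P)
    (α : ℝ) (hα : α ∈ Set.Ioo (0:ℝ) 1)
    (E : Set Ω) (hE : MeasurableSet E) (hEpos : 0 < (P E).toReal)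
    (s c : ℝ) (hc : 0 < c)
    (hdecomp : ∀ ω ∈ E, G ω = s + c * Gt ω)
    (F : ℝ → ℝ) (hF : ∀ z, F z = (P {ω | G ω ≤ z}).toReal)
    (lam : ℝ) (hlam : lam = sInf {z | α ≤ F z})
    (p : ℝ) (hp : p = (P {ω | G ω = lam}).toReal) (hppos : 0 < p)
    (hα1 : F lam - p ≤ α) (hα2 : α ≤ F lam)
    (ξ : Ω → ℝ)
    (hξ : ∀ ω, ξ ω = if G ω < lam then α⁻¹
      else if G ω = lam then (1 - (F lam - p) / α) / p else 0)
    (ξt : ℝ) (hξt : ξt = (∫ ω in E, ξ ω ∂P) / (P E).toReal)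
    (Ft pt : ℝ → ℝ)
    (hFt : ∀ z, Ft z = (P ({ω | Gt ω ≤ z} ∩ E)).toReal / (P E).toReal)
    (hpt : ∀ z, pt z = (P ({ω | Gt ω = z} ∩ E)).toReal / (P E).toReal) :
    α * ξt = Ft ((lam - s) / c) - pt ((lam - s) / c) * (F lam - α) / p
    ∧ (pt ((lam - s) / c) = 0 → α * ξt = Ft ((lam - s) / c)) := by
  obtain ⟨hα0, hα1'⟩ := hα
  set z : ℝ := (lam - s) / c with hz
  have hcne : c ≠ 0 := hc.ne'
  have hiff1 : ∀ ω ∈ E, (G ω < lam ↔ Gt ω < z) := by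
    intro ω hω
    rw [hdecomp ω hω, hz, lt_div_iff₀ hc]
    constructor <;> intro h <;> nlinarith [mul_comm c (Gt ω)]
  have hiff2 : ∀ ω ∈ E, (G ω = lam ↔ Gt ω = z) := by
    intro ω hω
    rw [hdecomp ω hω, hz, eq_div_iff hcne]
    constructor <;> intro h <;> nlinarith [mul_comm c (Gt ω)]
  set v : ℝ := (1 - (F lam - p) / α) / p with hv
  set A : Set Ω := {ω | Gt ω < z} ∩ E with hA
  set B : Set Ω := {ω | Gt ω = z} ∩ E with hB
  have hm1 : MeasurableSet {ω | Gt ω < z} := hGtm measurableSet_Iio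
  have hm2 : MeasurableSet {ω | Gt ω = z} := hGtm (measurableSet_singleton z)
  have hAm : MeasurableSet A := hm1.inter hE
  have hBm : MeasurableSet B := hm2.inter hE
  have hcongr : Set.EqOn ξ
      (fun ω => Set.indicator {ω | Gt ω < z} (fun _ => α⁻¹) ω
        + Set.indicator {ω | Gt ω = z} (fun _ => v) ω) E := by
    intro ω hω
    simp only [hξ ω]
    by_cases h1 : G ω < lam
    · have hlt : Gt ω < z := (hiff1 ω hω).1 h1
      have hne : Gt ω ≠ z := ne_of_lt hlt
      simp [hlt, hne, h1]
    · by_cases h2 : G ω = lam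
      · have heq : Gt ω = z := (hiff2 ω hω).1 h2
        simp [heq, h1, h2]
      · have hne : Gt ω ≠ z := fun h => h2 ((hiff2 ω hω).2 h)
        have hnlt : ¬ Gt ω < z := fun h => h1 ((hiff1 ω hω).2 h)
        simp [hne, hnlt, h1, h2]
  have hint : ∫ ω in E, ξ ω ∂P = (P A).toReal * α⁻¹ + (P B).toReal * v := by
    rw [setIntegral_congr_fun hE hcongr]
    rw [integral_add
      (((integrable_const α⁻¹).indicator hm1).restrict)
      (((integrable_const v).indicator hm2).restrict)]
    rw [setIntegral_indicator hm1, setIntegral_indicator hm2,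
      setIntegral_const, setIntegral_const]
    simp only [smul_eq_mul, hA, hB, Set.inter_comm E, measureReal_def]
  have hsplit : (P ({ω | Gt ω ≤ z} ∩ E)).toReal = (P A).toReal + (P B).toReal := by
    have hun : {ω | Gt ω ≤ z} ∩ E = A ∪ B := by
      ext ω
      simp only [hA, hB, Set.mem_inter_iff, Set.mem_union, Set.mem_setOf_eq,
        le_iff_lt_or_eq]
      tauto
    have hdisj : Disjoint A B := by
      rw [Set.disjoint_left]
      rintro ω ⟨h1, -⟩ ⟨h2, -⟩
      exact ne_of_lt h1 h2
    rw [hun, measure_union hdisj hBm,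
      ENNReal.toReal_add (measure_ne_top P A) (measure_ne_top P B)]
  have hene : (P E).toReal ≠ 0 := hEpos.ne'
  have hαne : α ≠ 0 := hα0.ne'
  have hpne : p ≠ 0 := hppos.ne'
  have key : α * ξt = Ft z - pt z * (F lam - α) / p := by
    rw [hξt, hint, hFt z, hpt z, hsplit]
    have hAB : (P ({ω | Gt ω = z} ∩ E)).toReal = (P B).toReal := by rw [hB]
    rw [hAB, hv]
    field_simp
    ring
  refine ⟨key, fun hpt0 => ?_⟩
  rw [key, hpt0]
  ring
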